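/- Let f : V → [0,∞] be lower semicontinuous with respect to the weak topology of V, let A : V → W be a bounded linear operator, let d ∈ W, and define J(x) = f(x) + (1/2)‖Ax − d‖² and J_γ(x) = Q_γ(f)(x) + (1/2)‖Ax − d‖². If ‖A‖² < γ, then the set of global minimizers of J_γ equals the set of global minimizers of J, and the global minimum values of J and J_γ coincide. -/

import Mathlib

set_option linter.unusedSectionVars false


variable {V : Type*} [NormedAddCommGroup V] [InnerProductSpace ℝ V] [CompleteSpace V]
  [TopologicalSpace.SeparableSpace V]

/-- The quadratic envelope `Q_γ(f)`:
`Q_γ(f)(x) = sup { α − (γ/2)‖x−y‖² : α ∈ ℝ, y ∈ V, α − (γ/2)‖·−y‖² ≤ f }`. -/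
noncomputable def Qenv (γ : ℝ) (f : V → EReal) (x : V) : EReal :=
  sSup {v : EReal | ∃ α : ℝ, ∃ y : V,
    (∀ z : V, ((α - γ / 2 * ‖z - y‖ ^ 2 : ℝ) : EReal) ≤ f z) ∧
      v = ((α - γ / 2 * ‖x - y‖ ^ 2 : ℝ) : EReal)}

/-- The transform `S_γ(f)(y) = sup_x ( −f(x) − (γ/2)‖x−y‖² )`. -/
noncomputable def Senv (γ : ℝ) (f : V → EReal) (y : V) : EReal :=
  ⨆ x : V, (-(f x) - ((γ / 2 * ‖x - y‖ ^ 2 : ℝ) : EReal))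

/-- Convexity for extended-real-valued functions. -/
def ERealConvex (g : V → EReal) : Prop :=
  ∀ x y : V, ∀ a b : ℝ, 0 ≤ a → 0 ≤ b → a + b = 1 →
    g (a • x + b • y) ≤ (a : EReal) * g x + (b : EReal) * g y

/-- The lower semicontinuous convex envelope: the (pointwise) greatest lower semicontinuous
convex minorant of `g`. -/
noncomputable def convEnv (g : V → EReal) (x : V) : EReal :=
  ⨆ h : {h : V → EReal // LowerSemicontinuous h ∧ ERealConvex h ∧ ∀ z, h z ≤ g z}, h.1 x

/-- Lower semicontinuity with respect to the weak topology of `V`. -/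
def WeaklyLSC (g : V → EReal) : Prop :=
  LowerSemicontinuous (fun x : WeakSpace ℝ V => g x)

/-- `h` is coercive iff all its sublevel sets are bounded. -/
def Coercive (h : V → EReal) : Prop :=
  ∀ c : ℝ, Bornology.IsBounded {x : V | h x ≤ (c : EReal)}


/-- `J(x) = f(x) + (1/2)‖Ax − d‖²`. -/
noncomputable def Jfun {W : Type*} [NormedAddCommGroup W] [InnerProductSpace ℝ W]
    (f : V → EReal) (A : V →L[ℝ] W) (d : W) (x : V) : EReal :=
  f x + ((1 / 2 * ‖A x - d‖ ^ 2 : ℝ) : EReal)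

/-- `J_γ(x) = Q_γ(f)(x) + (1/2)‖Ax − d‖²`. -/
noncomputable def Jgamma {W : Type*} [NormedAddCommGroup W] [InnerProductSpace ℝ W]
    (γ : ℝ) (f : V → EReal) (A : V →L[ℝ] W) (d : W) (x : V) : EReal :=
  Qenv γ f x + ((1 / 2 * ‖A x - d‖ ^ 2 : ℝ) : EReal)

lemma lsc_of_weaklyLSC {f : V → EReal} (h : WeaklyLSC f) : LowerSemicontinuous f :=
  LowerSemicontinuous.comp (g := (toWeakSpaceCLM ℝ V)) h (toWeakSpaceCLM ℝ V).continuous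

lemma shift_ident (γ : ℝ) (hγ : γ ≠ 0) (p : V) (s : ℝ) (z : V) :
    (γ/2 * ‖γ⁻¹ • p‖^2 - s) - γ/2 * ‖z - γ⁻¹ • p‖^2 = ((inner ℝ p z : ℝ) - γ/2*‖z‖^2) - s := by
  rw [norm_sub_sq_real, real_inner_smul_right, real_inner_comm z p]
  field_simp
  ring

lemma Qenv_le_self (γ : ℝ) (f : V → EReal) (x : V) : Qenv γ f x ≤ f x := by
  refine sSup_le ?_
  rintro v ⟨α, y, hm, rfl⟩
  exact hm x

lemma Qenv_top (γ : ℝ) {f : V → EReal} (h : ∀ z, f z = ⊤) (x : V) : Qenv γ f x = ⊤ := by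
  rw [Qenv, sSup_eq_top]
  intro b hb
  obtain ⟨α, hα1, hα2⟩ := EReal.exists_between_coe_real hb
  refine ⟨((α - γ / 2 * ‖x - x‖ ^ 2 : ℝ) : EReal), ⟨α, x, fun z => by rw [h z]; exact le_top, rfl⟩, ?_⟩
  simpa using hα1

lemma ereal_ne_bot' {a : EReal} (h : 0 ≤ a) : a ≠ ⊥ := by
  intro hb; rw [hb] at h; simp at h

lemma ereal_sub_helper {m c : ℝ} {a : EReal} (ha : a ≠ ⊥) (h : (m : EReal) ≤ a + (c : EReal)) :
    ((m - c : ℝ) : EReal) ≤ a := by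
  induction a with
  | bot => simp at ha
  | coe t =>
    rw [← EReal.coe_add] at h
    exact_mod_cast by linarith [(EReal.coe_le_coe_iff).1 h]
  | top => exact le_top

lemma key_quad {W : Type*} [NormedAddCommGroup W] [InnerProductSpace ℝ W] [CompleteSpace W]
    (A : V →L[ℝ] W) (d : W) (γ : ℝ) (x z : V) :
    ((inner ℝ (γ • x - (ContinuousLinearMap.adjoint A) (A x - d)) z : ℝ) - γ/2*‖z‖^2)
      - ((inner ℝ (γ • x - (ContinuousLinearMap.adjoint A) (A x - d)) x : ℝ) - γ/2*‖x‖^2)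
      + (γ - ‖A‖^2)/2 * ‖z - x‖^2
      ≤ 1/2*‖A x - d‖^2 - 1/2*‖A z - d‖^2 := by
  set p := γ • x - (ContinuousLinearMap.adjoint A) (A x - d) with hp
  have h1 : ‖A (z - x)‖^2 ≤ ‖A‖^2 * ‖z - x‖^2 := by
    have h := A.le_opNorm (z - x)
    calc ‖A (z-x)‖^2 ≤ (‖A‖ * ‖z-x‖)^2 := by
          exact pow_le_pow_left₀ (norm_nonneg _) h 2
      _ = ‖A‖^2 * ‖z-x‖^2 := by ring
  have e0 : (inner ℝ p z : ℝ) - inner ℝ p x = inner ℝ p (z - x) := by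
    rw [inner_sub_right]
  have e1 : (inner ℝ p (z - x) : ℝ)
      = γ * inner ℝ x (z - x) - inner ℝ (A x - d) (A (z - x)) := by
    rw [hp, inner_sub_left, real_inner_smul_left, ContinuousLinearMap.adjoint_inner_left]
  have e2 : ‖z‖^2 = ‖x‖^2 + 2 * inner ℝ x (z - x) + ‖z - x‖^2 := by
    have hz : z = x + (z - x) := by abel
    calc ‖z‖^2 = ‖x + (z - x)‖^2 := by rw [← hz]
      _ = ‖x‖^2 + 2 * inner ℝ x (z - x) + ‖z - x‖^2 := norm_add_sq_real x (z - x)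
  have e3 : ‖A z - d‖^2 = ‖A x - d‖^2 + 2 * inner ℝ (A x - d) (A (z - x)) + ‖A (z - x)‖^2 := by
    have hz : A z - d = (A x - d) + A (z - x) := by rw [map_sub]; abel
    rw [hz]; exact norm_add_sq_real _ _
  have e4 : (inner ℝ p z : ℝ) - γ/2*‖z‖^2 - ((inner ℝ p x : ℝ) - γ/2*‖x‖^2) + (γ - ‖A‖^2)/2*‖z-x‖^2
      = -((inner ℝ (A x - d) (A (z - x)) : ℝ)) - (‖A‖^2)/2*‖z-x‖^2 := by
    linear_combination e0 + e1 - γ/2 * e2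
  linarith [e3, e4, h1]

lemma core {W : Type*} [NormedAddCommGroup W] [InnerProductSpace ℝ W] [CompleteSpace W]
    (f : V → EReal) (hf0 : ∀ x, 0 ≤ f x)
    (A : V →L[ℝ] W) (d : W) (γ : ℝ) (hA : ‖A‖ ^ 2 < γ)
    (x₀ : V) (hx₀ : f x₀ ≠ ⊤)
    (x : V) (r : ℝ)
    (H : ∀ z : V, ((r + 1/2*‖A x - d‖^2 - 1/2*‖A z - d‖^2 : ℝ) : EReal) ≤ f z) :
    (r : EReal) ≤ Qenv γ f x ∧
      (Qenv γ f x ≤ (r : EReal) → LowerSemicontinuous f → f x ≤ (r : EReal)) := by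
  have hγ : 0 < γ := lt_of_le_of_lt (sq_nonneg ‖A‖) hA
  set c : ℝ := γ - ‖A‖^2 with hc
  have hcpos : 0 < c := by rw [hc]; linarith
  set p : V := γ • x - (ContinuousLinearMap.adjoint A) (A x - d) with hp
  set φ : V → ℝ := fun z => (inner ℝ p z : ℝ) - γ/2*‖z‖^2 with hφ
  -- pointwise real lower bound for f
  have hreal : ∀ z : V, ((φ z - φ x + r + c/2*‖z-x‖^2 : ℝ) : EReal) ≤ f z := by
    intro z
    refine le_trans ?_ (H z)
    rw [EReal.coe_le_coe_iff]
    have hq := key_quad A d γ x z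
    rw [← hp] at hq
    have hq2 : φ z - φ x + c/2 * ‖z - x‖^2 ≤ 1/2*‖A x - d‖^2 - 1/2*‖A z - d‖^2 := by
      simpa [hφ, hc] using hq
    linarith
  -- the sup of φ - f
  set S : Set EReal := {v | ∃ z : V, v = (φ z : EReal) - f z} with hS
  have hub : ∀ z : V, (φ z : EReal) - f z ≤ ((φ x - r - c/2*‖z-x‖^2 : ℝ) : EReal) := by
    intro z
    by_cases ht : f z = ⊤
    · rw [ht, EReal.sub_top]; exact bot_le
    · obtain ⟨t, htt⟩ : ∃ t : ℝ, f z = (t : EReal) :=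
        ⟨(f z).toReal, (EReal.coe_toReal ht (ereal_ne_bot' (hf0 z))).symm⟩
      have h1 : φ z - φ x + r + c/2*‖z-x‖^2 ≤ t := by
        have := hreal z; rw [htt] at this; exact_mod_cast this
      rw [htt, ← EReal.coe_sub, EReal.coe_le_coe_iff]
      linarith
  have hσub : sSup S ≤ ((φ x - r : ℝ) : EReal) := by
    refine sSup_le ?_
    rintro v ⟨z, rfl⟩
    refine (hub z).trans ?_
    rw [EReal.coe_le_coe_iff]
    nlinarith [norm_nonneg (z - x), sq_nonneg ‖z - x‖, hcpos]
  obtain ⟨t₀, ht₀⟩ : ∃ t : ℝ, f x₀ = (t : EReal) :=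
    ⟨(f x₀).toReal, (EReal.coe_toReal hx₀ (ereal_ne_bot' (hf0 x₀))).symm⟩
  have hσlb : ((φ x₀ - t₀ : ℝ) : EReal) ≤ sSup S := by
    refine le_sSup ?_
    exact ⟨x₀, by rw [ht₀, ← EReal.coe_sub]⟩
  obtain ⟨s, hσ⟩ : ∃ s : ℝ, sSup S = (s : EReal) := by
    refine ⟨(sSup S).toReal, (EReal.coe_toReal ?_ ?_).symm⟩
    · exact ne_top_of_le_ne_top (EReal.coe_ne_top _) hσub
    · intro h
      rw [h, le_bot_iff] at hσlb
      exact EReal.coe_ne_bot _ hσlb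
  have hsle : s ≤ φ x - r := by
    rw [hσ, EReal.coe_le_coe_iff] at hσub; exact hσub
  have hminor : ∀ z : V, ((φ z - s : ℝ) : EReal) ≤ f z := by
    intro z
    have h1 : (φ z : EReal) - f z ≤ (s : EReal) := hσ ▸ le_sSup ⟨z, rfl⟩
    by_cases ht : f z = ⊤
    · rw [ht]; exact le_top
    · obtain ⟨t, htt⟩ : ∃ t : ℝ, f z = (t : EReal) :=
        ⟨(f z).toReal, (EReal.coe_toReal ht (ereal_ne_bot' (hf0 z))).symm⟩
      rw [htt] at h1 ⊢
      rw [← EReal.coe_sub] at h1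
      rw [EReal.coe_le_coe_iff] at h1 ⊢
      linarith
  have hQge : ((φ x - s : ℝ) : EReal) ≤ Qenv γ f x := by
    refine le_sSup ⟨γ/2 * ‖γ⁻¹ • p‖^2 - s, γ⁻¹ • p, fun z => ?_, ?_⟩
    · have hid := shift_ident γ (ne_of_gt hγ) p s z
      have : (γ/2 * ‖γ⁻¹ • p‖^2 - s - γ / 2 * ‖z - γ⁻¹ • p‖^2 : ℝ) = φ z - s := by
        rw [hφ]; linarith [hid]
      rw [this]
      exact hminor z
    · congr 1
      have hid := shift_ident γ (ne_of_gt hγ) p s x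
      rw [hφ]
      linarith [hid]
  have hc1 : (r : EReal) ≤ Qenv γ f x := by
    refine le_trans ?_ hQge
    rw [EReal.coe_le_coe_iff]
    linarith
  refine ⟨hc1, fun hQ hlsc => ?_⟩
  have hs2 : φ x - s ≤ r := by
    have := hQge.trans hQ
    rwa [EReal.coe_le_coe_iff] at this
  have hseq : s = φ x - r := by linarith
  clear_value p φ c
  by_contra hcon
  push_neg at hcon
  obtain ⟨b, hrb, hbf⟩ := EReal.exists_between_coe_real hcon
  have hrb' : r < b := EReal.coe_lt_coe_iff.1 hrb
  have hev := hlsc x (b : EReal) hbf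
  rw [Metric.eventually_nhds_iff] at hev
  obtain ⟨δ₁, hδ₁, hball⟩ := hev
  have hφc : Continuous φ := by
    rw [hφ]
    exact (continuous_const.inner continuous_id).sub
      (continuous_const.mul (continuous_norm.pow 2 : Continuous fun z : V => ‖z‖ ^ 2))
  set ε : ℝ := (b - r)/3 with hε
  have hεpos : 0 < ε := by rw [hε]; linarith
  obtain ⟨δ₂, hδ₂pos, hφball⟩ := Metric.continuousAt_iff.1 (hφc.continuousAt (x := x)) ε hεpos
  set δ : ℝ := min δ₁ δ₂ with hδ
  have hδpos : 0 < δ := lt_min hδ₁ hδ₂pos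
  obtain ⟨n, hn⟩ := exists_nat_one_div_lt (show 0 < min ε (c/2*δ^2) by positivity)
  have hn1 : (0:ℝ) < 1/((n:ℝ)+1) := by positivity
  have hlt : ((s - 1/((n:ℝ)+1) : ℝ) : EReal) < sSup S := by
    rw [hσ, EReal.coe_lt_coe_iff]
    linarith
  obtain ⟨v, ⟨z, rfl⟩, hv⟩ := lt_sSup_iff.1 hlt
  have hzt : f z ≠ ⊤ := by
    intro h; rw [h, EReal.sub_top] at hv; exact absurd hv (by simp)
  obtain ⟨t, htz⟩ : ∃ t : ℝ, f z = (t : EReal) :=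
    ⟨(f z).toReal, (EReal.coe_toReal hzt (ereal_ne_bot' (hf0 z))).symm⟩
  rw [htz, ← EReal.coe_sub, EReal.coe_lt_coe_iff] at hv
  -- hv : s - 1/((n:ℝ)+1) < φ z - t
  have hft : φ z - φ x + r + c/2*‖z-x‖^2 ≤ t := by
    have := hreal z; rw [htz] at this; exact_mod_cast this
  have hnorm2 : c/2*‖z-x‖^2 < 1/((n:ℝ)+1) := by linarith
  have hmin1 : (1:ℝ)/(n+1) < ε := lt_of_lt_of_le hn (min_le_left _ _)
  have hmin2 : (1:ℝ)/(n+1) < c/2*δ^2 := lt_of_lt_of_le hn (min_le_right _ _)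
  have hsq : ‖z - x‖^2 < δ^2 := by
    have h2 : c/2*‖z-x‖^2 < c/2*δ^2 := by linarith
    exact (mul_lt_mul_iff_right₀ (show (0:ℝ) < c/2 by linarith)).mp h2
  have hnormδ : ‖z - x‖ < δ := by
    nlinarith [norm_nonneg (z - x), hδpos, hsq]
  have hdist : dist z x < δ := by rwa [dist_eq_norm]
  have hbz : (b : EReal) < f z := hball (lt_of_lt_of_le hdist (min_le_left _ _))
  have hbz' : b < t := by rw [htz] at hbz; exact_mod_cast hbz
  have hφz : |φ z - φ x| < ε := by
    have := hφball (lt_of_lt_of_le hdist (min_le_right _ _))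
    rwa [Real.dist_eq] at this
  have : t < φ z - s + 1/((n:ℝ)+1) := by linarith
  have : t < r + 2*ε := by
    have h1 : φ z < φ x + ε := by cases abs_lt.1 hφz; linarith
    linarith [hseq]
  rw [hε] at this
  linarith

lemma ereal_add_coe_top {a : EReal} {c : ℝ} (h : a + (c:EReal) = ⊤) : a = ⊤ := by
  by_contra hb
  exact absurd h (ne_of_lt (EReal.add_lt_top hb (EReal.coe_ne_top c)))

lemma Qenv_nonneg (γ : ℝ) (hγ : 0 ≤ γ) {f : V → EReal} (hf0 : ∀ x, 0 ≤ f x) (x : V) :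
    (0 : EReal) ≤ Qenv γ f x := by
  have hmem : ((0 - γ / 2 * ‖x - x‖ ^ 2 : ℝ) : EReal) ∈ {v : EReal | ∃ α : ℝ, ∃ y : V,
      (∀ z : V, ((α - γ / 2 * ‖z - y‖ ^ 2 : ℝ) : EReal) ≤ f z) ∧
      v = ((α - γ / 2 * ‖x - y‖ ^ 2 : ℝ) : EReal)} := by
    refine ⟨0, x, fun z => le_trans ?_ (hf0 z), rfl⟩
    have h0 : (0 - γ / 2 * ‖z - x‖ ^ 2 : ℝ) ≤ 0 := by
      have : (0:ℝ) ≤ γ / 2 * ‖z - x‖ ^ 2 := by positivity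
      linarith
    exact_mod_cast h0
  have h := le_sSup hmem
  have hval : ((0 - γ / 2 * ‖x - x‖ ^ 2 : ℝ) : EReal) = (0 : EReal) := by
    norm_num [sub_self, norm_zero]
  rw [hval] at h
  exact h

theorem stmt_18 {W : Type*} [NormedAddCommGroup W] [InnerProductSpace ℝ W] [CompleteSpace W]
    [TopologicalSpace.SeparableSpace W]
    (f : V → EReal) (hf0 : ∀ x, 0 ≤ f x) (hwlsc : WeaklyLSC f)
    (A : V →L[ℝ] W) (d : W) (γ : ℝ) (hA : ‖A‖ ^ 2 < γ) :
    {x : V | ∀ y, Jgamma γ f A d x ≤ Jgamma γ f A d y} =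
      {x : V | ∀ y, Jfun f A d x ≤ Jfun f A d y} ∧
    (⨅ x : V, Jgamma γ f A d x) = ⨅ x : V, Jfun f A d x := by
  have hγ : 0 < γ := lt_of_le_of_lt (sq_nonneg ‖A‖) hA
  have hQle : ∀ u : V, Qenv γ f u ≤ f u := Qenv_le_self γ f
  have hJle : ∀ u : V, Jgamma γ f A d u ≤ Jfun f A d u := fun u => add_le_add_left (hQle u) _
  by_cases hprop : ∀ z : V, f z = ⊤
  · have hJ : ∀ z : V, Jfun f A d z = ⊤ := fun z => by
      rw [Jfun, hprop z]; exact EReal.top_add_of_ne_bot (EReal.coe_ne_bot _)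
    have hJg : ∀ z : V, Jgamma γ f A d z = ⊤ := fun z => by
      rw [Jgamma, Qenv_top γ hprop]; exact EReal.top_add_of_ne_bot (EReal.coe_ne_bot _)
    constructor
    · ext u; simp [hJ, hJg]
    · simp [hJ, hJg]
  · push_neg at hprop
    obtain ⟨x₀, hx₀⟩ := hprop
    have hlsc : LowerSemicontinuous f := lsc_of_weaklyLSC hwlsc
    have claimA : ∀ (μ : ℝ), (∀ z, (μ:EReal) ≤ Jfun f A d z) →
        ∀ u, (μ:EReal) ≤ Jgamma γ f A d u := by
      intro μ hμ u
      have H : ∀ z, (((μ - 1/2*‖A u - d‖^2) + 1/2*‖A u - d‖^2 - 1/2*‖A z - d‖^2 : ℝ):EReal)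
          ≤ f z := by
        intro z
        apply ereal_sub_helper (ereal_ne_bot' (hf0 z))
        have h1 := hμ z
        rw [Jfun] at h1
        rw [show ((μ - 1/2*‖A u - d‖^2) + 1/2*‖A u - d‖^2 : ℝ) = μ by ring]
        exact h1
      have h1 := (core f hf0 A d γ hA x₀ hx₀ u (μ - 1/2*‖A u - d‖^2) H).1
      rw [Jgamma]
      calc (μ:EReal)
          = ((μ - 1/2*‖A u - d‖^2 : ℝ):EReal) + ((1 / 2 * ‖A u - d‖ ^ 2 : ℝ):EReal) := by
            rw [← EReal.coe_add]; norm_num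
        _ ≤ Qenv γ f u + ((1 / 2 * ‖A u - d‖ ^ 2 : ℝ):EReal) := add_le_add_left h1 _
    have hJ0 : ∀ z, (0:EReal) ≤ Jfun f A d z := fun z =>
      add_nonneg (hf0 z) (EReal.coe_nonneg.2 (by positivity))
    constructor
    · ext u
      simp only [Set.mem_setOf_eq]
      constructor
      · intro hmin y
        by_cases hQt : Qenv γ f u = ⊤
        · have hfu : f u = ⊤ := top_le_iff.1 (by rw [← hQt]; exact hQle u)
          have hJgu : Jgamma γ f A d u = ⊤ := by
            rw [Jgamma, hQt]; exact EReal.top_add_of_ne_bot (EReal.coe_ne_bot _)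
          have h1 : Jgamma γ f A d y = ⊤ := top_le_iff.1 (by rw [← hJgu]; exact hmin y)
          rw [Jgamma] at h1
          have hQy : Qenv γ f y = ⊤ := ereal_add_coe_top h1
          have hfy : f y = ⊤ := top_le_iff.1 (by rw [← hQy]; exact hQle y)
          rw [Jfun, Jfun, hfu, hfy,
            EReal.top_add_of_ne_bot (EReal.coe_ne_bot _),
            EReal.top_add_of_ne_bot (EReal.coe_ne_bot _)]
        · obtain ⟨r, hr⟩ : ∃ r : ℝ, Qenv γ f u = (r:EReal) :=
            ⟨_, (EReal.coe_toReal hQt (ereal_ne_bot' (Qenv_nonneg γ (le_of_lt hγ) hf0 u))).symm⟩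
          have H : ∀ z, ((r + 1/2*‖A u - d‖^2 - 1/2*‖A z - d‖^2 : ℝ):EReal) ≤ f z := by
            intro z
            apply ereal_sub_helper (ereal_ne_bot' (hf0 z))
            have h1 := le_trans (hmin z) (hJle z)
            rw [Jgamma, hr, Jfun, ← EReal.coe_add] at h1
            convert h1 using 2 <;> norm_num
          have h2 := (core f hf0 A d γ hA x₀ hx₀ u r H).2 (le_of_eq hr) hlsc
          have hJu : Jfun f A d u ≤ Jgamma γ f A d u := by
            rw [Jfun, Jgamma, hr]; exact add_le_add_left h2 _
          exact le_trans (le_trans hJu (hmin y)) (hJle y)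
      · intro hmin y
        by_cases hft : f u = ⊤
        · exfalso
          have h1 : Jfun f A d u = ⊤ := by
            rw [Jfun, hft]; exact EReal.top_add_of_ne_bot (EReal.coe_ne_bot _)
          have h2 : Jfun f A d x₀ = ⊤ := top_le_iff.1 (by rw [← h1]; exact hmin x₀)
          rw [Jfun] at h2
          exact hx₀ (ereal_add_coe_top h2)
        · obtain ⟨t, htu⟩ : ∃ t : ℝ, f u = (t:EReal) :=
            ⟨_, (EReal.coe_toReal hft (ereal_ne_bot' (hf0 u))).symm⟩
          have hμ : ∀ z, ((t + 1/2*‖A u - d‖^2 : ℝ):EReal) ≤ Jfun f A d z := by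
            intro z
            refine le_trans (le_of_eq ?_) (hmin z)
            rw [Jfun, htu, ← EReal.coe_add]
          have h3 := claimA (t + 1/2*‖A u - d‖^2) hμ y
          refine le_trans (le_trans (hJle u) ?_) h3
          rw [Jfun, htu, ← EReal.coe_add]
    · apply le_antisymm
      · exact iInf_mono hJle
      · refine le_iInf fun u => ?_
        have hmlt : (⨅ z, Jfun f A d z) < ⊤ :=
          lt_of_le_of_lt (iInf_le _ x₀)
            (by rw [Jfun]; exact EReal.add_lt_top hx₀ (EReal.coe_ne_top _))
        have hm0 : (0:EReal) ≤ ⨅ z, Jfun f A d z := le_iInf hJ0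
        obtain ⟨μ, hμeq⟩ : ∃ μ : ℝ, (⨅ z, Jfun f A d z) = (μ:EReal) :=
          ⟨_, (EReal.coe_toReal (ne_of_lt hmlt) (ereal_ne_bot' hm0)).symm⟩
        rw [hμeq]
        exact claimA μ (fun z => by rw [← hμeq]; exact iInf_le _ z) u
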